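/- For every integer j ≥ 1 and every real z ≥ 0, |e^{-z} · (z^j/j! - z^{j+1}/(j+1)!)| ≤ 1/(√(2π)·((j+1) - √(j+1))). -/

import Mathlib

open Real Set


lemma aux_stirling (m : ℕ) (hm : 1 ≤ m) :
    (m : ℝ) ^ m * Real.exp (-(m : ℝ)) * Real.sqrt (2 * π * m) ≤ (m.factorial : ℝ) := by
  obtain ⟨n, rfl⟩ : ∃ n, m = n + 1 := ⟨m - 1, (Nat.succ_pred_eq_of_pos hm).symm⟩
  have h1 : Real.sqrt π ≤ Stirling.stirlingSeq (n + 1) :=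
    Stirling.stirlingSeq'_antitone.le_of_tendsto
      (Stirling.tendsto_stirlingSeq_sqrt_pi.comp (Filter.tendsto_add_atTop_nat 1)) n
  rw [Stirling.stirlingSeq, le_div_iff₀ (by positivity)] at h1
  refine le_trans (le_of_eq ?_) h1
  rw [show (2 : ℝ) * π * ((n:ℕ)+1 : ℕ) = π * (2 * ((n:ℕ)+1:ℕ)) by push_cast; ring,
    Real.sqrt_mul (by positivity), div_pow, Real.exp_one_pow, Real.exp_neg]
  push_cast
  field_simp

lemma aux_mode (m : ℕ) (hm : 1 ≤ m) (z : ℝ) (hz : 0 ≤ z) :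
    z ^ m * Real.exp (-z) ≤ (m : ℝ) ^ m * Real.exp (-(m : ℝ)) := by
  rcases eq_or_lt_of_le hz with rfl | hz'
  · simp [zero_pow (by omega : m ≠ 0)]; positivity
  have hm' : (0:ℝ) < m := by exact_mod_cast hm
  have hlog : Real.log (z / m) ≤ z / m - 1 := Real.log_le_sub_one_of_pos (by positivity)
  have h3 : (m:ℝ) * (z / m) = z := by field_simp
  have h2 : (m:ℝ) * Real.log z - z ≤ (m:ℝ) * Real.log m - m := by
    rw [Real.log_div hz'.ne' hm'.ne'] at hlog
    have := mul_le_mul_of_nonneg_left hlog hm'.le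
    nlinarith
  have e1 : z ^ m * Real.exp (-z) = Real.exp ((m:ℝ) * Real.log z - z) := by
    rw [← Real.rpow_natCast z, Real.rpow_def_of_pos hz', ← Real.exp_add]
    congr 1; ring
  have e2 : (m:ℝ) ^ m * Real.exp (-(m:ℝ)) = Real.exp ((m:ℝ) * Real.log m - m) := by
    rw [← Real.rpow_natCast (m:ℝ), Real.rpow_def_of_pos hm', ← Real.exp_add]
    congr 1; ring
  rw [e1, e2]
  exact Real.exp_le_exp.mpr h2

lemma gfun_hasDeriv (M : ℝ) (k : ℕ) (hM : M = (k:ℝ) + 2) (x : ℝ) :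
    HasDerivAt (fun z => z ^ (k+1) * Real.exp (-z) * (M - z))
      (Real.exp (-x) * x ^ k * ((x - M)^2 - M)) x := by
  have h1 : HasDerivAt (fun y : ℝ => Real.exp (-y)) (-Real.exp (-x)) x := by
    simpa [Function.comp_def] using (Real.hasDerivAt_exp (-x)).comp x (hasDerivAt_neg x)
  have h2 := ((hasDerivAt_pow (k+1) x).mul h1).mul ((hasDerivAt_const x M).sub (hasDerivAt_id x))
  refine h2.congr_deriv ?_
  simp only [Nat.add_sub_cancel, Pi.sub_apply, Pi.mul_apply, id]
  subst hM
  push_cast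
  ring

lemma g2fun_hasDeriv (M : ℝ) (k : ℕ) (hM : M = (k:ℝ) + 2) (x : ℝ) :
    HasDerivAt (fun z => z ^ (k+1) * Real.exp (-z) * (z - M))
      (Real.exp (-x) * x ^ k * (M - (x - M)^2)) x := by
  have h1 : HasDerivAt (fun y : ℝ => Real.exp (-y)) (-Real.exp (-x)) x := by
    simpa [Function.comp_def] using (Real.hasDerivAt_exp (-x)).comp x (hasDerivAt_neg x)
  have h2 := ((hasDerivAt_pow (k+1) x).mul h1).mul ((hasDerivAt_id x).sub (hasDerivAt_const x M))
  refine h2.congr_deriv ?_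
  simp only [Nat.add_sub_cancel, Pi.sub_apply, Pi.mul_apply, id]
  subst hM
  push_cast
  ring


lemma claimC (k : ℕ) (M : ℝ) (hM : M = (k:ℝ) + 2) (z : ℝ) (hz : 0 ≤ z) :
    z ^ (k+1) * Real.exp (-z) * |M - z| ≤
      M ^ (k+2) * Real.exp (-M) * Real.sqrt M / (M - Real.sqrt M) := by
  have hk0 : (0:ℝ) ≤ (k:ℝ) := Nat.cast_nonneg k
  have hM1 : (1:ℝ) < M := by rw [hM]; linarith
  have hMpos : (0:ℝ) < M := by linarith
  have hs : Real.sqrt M < M := (Real.sqrt_lt' hMpos).mpr (by nlinarith)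
  have hs0 : (0:ℝ) ≤ Real.sqrt M := Real.sqrt_nonneg M
  have hsq : Real.sqrt M ^ 2 = M := Real.sq_sqrt hMpos.le
  set s := Real.sqrt M with hsdef
  set z₀ := M - s with hz₀def
  set z₁ := M + s with hz₁def
  have hz₀ : 0 < z₀ := by simp only [hz₀def]; linarith
  have hz₁ : 0 < z₁ := by simp only [hz₁def]; linarith
  have hz₀₁ : z₀ ≤ z₁ := by simp only [hz₀def, hz₁def]; linarith
  have hMcast : ((k+2 : ℕ) : ℝ) = M := by rw [hM]; push_cast; ring
  have hmode : ∀ w : ℝ, 0 ≤ w → w ^ (k+2) * Real.exp (-w) ≤ M ^ (k+2) * Real.exp (-M) := by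
    intro w hw
    have := aux_mode (k+2) (by omega) w hw
    rwa [hMcast] at this
  -- peak value bound
  have hpeak : ∀ w : ℝ, 0 < w → z₀ ≤ w →
      w ^ (k+1) * Real.exp (-w) * s ≤ M ^ (k+2) * Real.exp (-M) * s / z₀ := by
    intro w hw hw'
    have h1 : w ^ (k+1) * Real.exp (-w) * s = w ^ (k+2) * Real.exp (-w) * s / w := by
      field_simp; ring
    rw [h1]
    exact div_le_div₀ (by positivity)
      (mul_le_mul_of_nonneg_right (hmode w hw.le) hs0) hz₀ hw'
  -- monotonicity of g on [0, z₀]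
  have mono1 : MonotoneOn (fun z => z ^ (k+1) * Real.exp (-z) * (M - z)) (Icc 0 z₀) := by
    apply monotoneOn_of_deriv_nonneg (convex_Icc _ _) (by fun_prop)
    · intro x hx
      exact ((gfun_hasDeriv M k hM x).differentiableAt).differentiableWithinAt
    · intro x hx
      rw [interior_Icc, mem_Ioo] at hx
      rw [(gfun_hasDeriv M k hM x).deriv]
      have h1 : s ≤ M - x := by simp only [hz₀def] at hx; linarith
      have h2 : M ≤ (x - M)^2 := by nlinarith
      have hxk : (0:ℝ) ≤ x ^ k := pow_nonneg hx.1.le k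
      exact mul_nonneg (mul_nonneg (Real.exp_pos (-x)).le hxk) (by linarith)
  have anti1 : AntitoneOn (fun z => z ^ (k+1) * Real.exp (-z) * (M - z)) (Icc z₀ M) := by
    apply antitoneOn_of_deriv_nonpos (convex_Icc _ _) (by fun_prop)
    · intro x hx
      exact ((gfun_hasDeriv M k hM x).differentiableAt).differentiableWithinAt
    · intro x hx
      rw [interior_Icc, mem_Ioo] at hx
      rw [(gfun_hasDeriv M k hM x).deriv]
      have h1 : 0 ≤ M - x := by linarith [hx.2]
      have h2 : M - x < s := by simp only [hz₀def] at hx; linarith [hx.1]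
      have h3 : (x - M)^2 ≤ M := by nlinarith
      have hx0 : 0 < x := lt_of_lt_of_le hz₀ hx.1.le
      have hxk : (0:ℝ) ≤ x ^ k := pow_nonneg hx0.le k
      have h4 := mul_nonneg (mul_nonneg (Real.exp_pos (-x)).le hxk) (sub_nonneg.mpr h3)
      have h5 : Real.exp (-x) * x ^ k * ((x - M) ^ 2 - M)
          = -(Real.exp (-x) * x ^ k * (M - (x - M) ^ 2)) := by ring
      rw [h5]; linarith
  have mono2 : MonotoneOn (fun z => z ^ (k+1) * Real.exp (-z) * (z - M)) (Icc M z₁) := by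
    apply monotoneOn_of_deriv_nonneg (convex_Icc _ _) (by fun_prop)
    · intro x hx
      exact ((g2fun_hasDeriv M k hM x).differentiableAt).differentiableWithinAt
    · intro x hx
      rw [interior_Icc, mem_Ioo] at hx
      rw [(g2fun_hasDeriv M k hM x).deriv]
      have h1 : 0 ≤ x - M := by linarith [hx.1]
      have h2 : x - M < s := by simp only [hz₁def] at hx; linarith [hx.2]
      have h3 : (x - M)^2 ≤ M := by nlinarith
      have hxk : (0:ℝ) ≤ x ^ k := pow_nonneg (le_trans hMpos.le hx.1.le) k
      exact mul_nonneg (mul_nonneg (Real.exp_pos (-x)).le hxk) (by linarith)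
  have anti2 : AntitoneOn (fun z => z ^ (k+1) * Real.exp (-z) * (z - M)) (Ici z₁) := by
    apply antitoneOn_of_deriv_nonpos (convex_Ici _) (by fun_prop)
    · intro x hx
      exact ((g2fun_hasDeriv M k hM x).differentiableAt).differentiableWithinAt
    · intro x hx
      rw [interior_Ici, mem_Ioi] at hx
      rw [(g2fun_hasDeriv M k hM x).deriv]
      have h1 : s ≤ x - M := by simp only [hz₁def] at hx; linarith
      have h2 : M ≤ (x - M)^2 := by nlinarith
      have hxk : (0:ℝ) ≤ x ^ k := pow_nonneg (by linarith [lt_trans hz₁ hx] : (0:ℝ) ≤ x) k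
      have h4 := mul_nonneg (mul_nonneg (Real.exp_pos (-x)).le hxk) (sub_nonneg.mpr h2)
      have h5 : Real.exp (-x) * x ^ k * (M - (x - M) ^ 2)
          = -(Real.exp (-x) * x ^ k * ((x - M) ^ 2 - M)) := by ring
      rw [h5]; linarith
  -- peak values
  have gz₀ : z₀ ^ (k+1) * Real.exp (-z₀) * (M - z₀) = z₀ ^ (k+1) * Real.exp (-z₀) * s := by
    simp only [hz₀def]; ring_nf
  have gz₁ : z₁ ^ (k+1) * Real.exp (-z₁) * (z₁ - M) = z₁ ^ (k+1) * Real.exp (-z₁) * s := by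
    simp only [hz₁def]; ring_nf
  rcases le_total z M with hzM | hzM
  · rw [abs_of_nonneg (by linarith)]
    have key : z ^ (k+1) * Real.exp (-z) * (M - z) ≤ z₀ ^ (k+1) * Real.exp (-z₀) * (M - z₀) := by
      rcases le_total z z₀ with h | h
      · exact mono1 ⟨hz, h⟩ ⟨hz₀.le, le_refl _⟩ h
      · exact anti1 ⟨le_refl _, by linarith⟩ ⟨h, hzM⟩ h
    calc z ^ (k+1) * Real.exp (-z) * (M - z) ≤ z₀ ^ (k+1) * Real.exp (-z₀) * (M - z₀) := key
      _ = z₀ ^ (k+1) * Real.exp (-z₀) * s := gz₀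
      _ ≤ _ := hpeak z₀ hz₀ (le_refl _)
  · rw [abs_of_nonpos (by linarith), neg_sub]
    have key : z ^ (k+1) * Real.exp (-z) * (z - M) ≤ z₁ ^ (k+1) * Real.exp (-z₁) * (z₁ - M) := by
      rcases le_total z z₁ with h | h
      · exact mono2 ⟨hzM, h⟩ ⟨by linarith, le_refl _⟩ h
      · exact anti2 (mem_Ici.mpr (le_refl _)) (mem_Ici.mpr h) h
    calc z ^ (k+1) * Real.exp (-z) * (z - M) ≤ z₁ ^ (k+1) * Real.exp (-z₁) * (z₁ - M) := key
      _ = z₁ ^ (k+1) * Real.exp (-z₁) * s := gz₁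
      _ ≤ _ := hpeak z₁ hz₁ hz₀₁

theorem stmt_10 (j : ℕ) (hj : 1 ≤ j) (z : ℝ) (hz : 0 ≤ z) :
    |Real.exp (-z) * (z ^ j / (j.factorial : ℝ) - z ^ (j + 1) / ((j + 1).factorial : ℝ))| ≤
      1 / (Real.sqrt (2 * Real.pi) * (((j : ℝ) + 1) - Real.sqrt ((j : ℝ) + 1))) := by
  obtain ⟨k, rfl⟩ : ∃ k, j = k + 1 := ⟨j - 1, (Nat.succ_pred_eq_of_pos hj).symm⟩
  set M : ℝ := (k : ℝ) + 2 with hMdef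
  have hM : M = (k:ℝ) + 2 := rfl
  have hMcast : ((k+2 : ℕ) : ℝ) = M := by push_cast; ring
  have hMj : ((k+1 : ℕ) : ℝ) + 1 = M := by push_cast; ring
  have hk0 : (0:ℝ) ≤ (k:ℝ) := Nat.cast_nonneg k
  have hMpos : (0:ℝ) < M := by rw [hM]; linarith
  have hs : Real.sqrt M < M := (Real.sqrt_lt' hMpos).mpr (by nlinarith)
  have hs0 : (0:ℝ) ≤ Real.sqrt M := Real.sqrt_nonneg M
  set s := Real.sqrt M with hsdef
  set z₀ := M - s with hz₀def
  have hz₀ : 0 < z₀ := by simp only [hz₀def]; linarith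
  have hFpos : (0:ℝ) < ((k+2).factorial : ℝ) := by
    exact_mod_cast Nat.cast_pos.mpr (Nat.factorial_pos (k+2))
  have hF1pos : (0:ℝ) < ((k+1).factorial : ℝ) := by
    exact_mod_cast Nat.cast_pos.mpr (Nat.factorial_pos (k+1))
  have hfact : ((k+1+1).factorial : ℝ) = M * ((k+1).factorial : ℝ) := by
    rw [Nat.factorial_succ]; push_cast [hM]; ring
  have e0 : Real.exp (-z) * (z ^ (k+1) / ((k+1).factorial : ℝ)
        - z ^ (k+1+1) / ((k+1+1).factorial : ℝ))
      = z ^ (k+1) * Real.exp (-z) * (M - z) / ((k+2).factorial : ℝ) := by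
    rw [hfact]
    field_simp
    ring
  rw [hMj, e0, abs_div, abs_of_pos hFpos, abs_mul, abs_mul,
    abs_of_nonneg (pow_nonneg hz _), abs_of_pos (Real.exp_pos _)]
  have hclaim := claimC k M hM z hz
  have hstep : z ^ (k+1) * Real.exp (-z) * |M - z| / ((k+2).factorial : ℝ)
      ≤ M ^ (k+2) * Real.exp (-M) * s / z₀ / ((k+2).factorial : ℝ) := by
    gcongr
  refine hstep.trans ?_
  -- Stirling
  have hstir : M ^ (k+2) * Real.exp (-M) * (Real.sqrt (2 * Real.pi) * s)
      ≤ ((k+2).factorial : ℝ) := by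
    have h := aux_stirling (k+2) (by omega)
    rw [hMcast] at h
    calc M ^ (k+2) * Real.exp (-M) * (Real.sqrt (2 * Real.pi) * s)
        = M ^ (k+2) * Real.exp (-M) * Real.sqrt (2 * Real.pi * M) := by
          rw [Real.sqrt_mul (by positivity : (0:ℝ) ≤ 2 * Real.pi) M]
      _ ≤ _ := h
  have hsqpi : (0:ℝ) < Real.sqrt (2 * Real.pi) := Real.sqrt_pos.mpr (by positivity)
  have hApos : (0:ℝ) ≤ M ^ (k+2) * Real.exp (-M) := by positivity
  rw [div_div, div_le_div_iff₀ (by positivity) (mul_pos hsqpi hz₀)]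
  have h7 := mul_le_mul_of_nonneg_right hstir hz₀.le
  nlinarith [h7]
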